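/- Let G be a centered Gaussian process whose covariance R(t,s) = E[G_t G_s] satisfies ∂²R/∂t∂s (t,s) = C_β |t-s|^{2β-2} + Ψ(t,s) with |Ψ(t,s)| ≤ C'_β (ts)^{β-1} for some β ∈ (1/2,1), in the sense that E[(G_t - G_s)²] = ∫_s^t ∫_s^t ∂²R/∂u∂v (u,v) du dv. Then there exists C > 0 independent of s,t such that E[(G_t - G_s)²] ≤ C |t-s|^{2β} for all 0 ≤ s ≤ t. -/

import Mathlib

open MeasureTheory intervalIntegral Real Set

lemma aux_abs_rpow_intInt {p : ℝ} (hp : -1 < p) (a b : ℝ) :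
    IntervalIntegrable (fun x => |x| ^ p) volume a b := by
  have base : ∀ c : ℝ, 0 ≤ c → IntervalIntegrable (fun x => |x| ^ p) volume 0 c := by
    intro c hc
    rw [intervalIntegrable_iff, uIoc_of_le hc]
    have m := intervalIntegrable_rpow' hp (a := 0) (b := c)
    rw [intervalIntegrable_iff, uIoc_of_le hc] at m
    exact m.congr_fun (fun x hx => by rw [abs_of_pos hx.1]) measurableSet_Ioc
  have all : ∀ c : ℝ, IntervalIntegrable (fun x => |x| ^ p) volume 0 c := by
    intro c
    rcases le_total 0 c with hc | hc
    · exact base c hc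
    · rw [IntervalIntegrable.iff_comp_neg]
      simp only [abs_neg, neg_zero]
      exact base (-c) (by linarith)
  exact (all a).symm.trans (all b)

lemma aux_abs_rpow_integral {p : ℝ} (hp : -1 < p) {a b : ℝ} (ha : a ≤ 0) (hb : 0 ≤ b) :
    (∫ x in a..b, |x| ^ p) = ((-a) ^ (p + 1) + b ^ (p + 1)) / (p + 1) := by
  have h1 : (∫ x in (0:ℝ)..b, |x| ^ p) = b ^ (p + 1) / (p + 1) := by
    rw [integral_congr (g := fun x => x ^ p) (fun x hx => ?_),
      integral_rpow (Or.inl hp)]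
    · rw [Real.zero_rpow (by linarith : p + 1 ≠ 0), sub_zero]
    · rw [uIcc_of_le hb] at hx
      rw [abs_of_nonneg hx.1]
  have h2 : (∫ x in a..(0:ℝ), |x| ^ p) = (-a) ^ (p + 1) / (p + 1) := by
    have := integral_comp_neg (a := 0) (b := -a) (fun x => |x| ^ p)
    simp only [abs_neg, neg_neg, neg_zero] at this
    rw [← this]
    rw [integral_congr (g := fun x => x ^ p) (fun x hx => ?_),
      integral_rpow (Or.inl hp)]
    · rw [Real.zero_rpow (by linarith : p + 1 ≠ 0), sub_zero]
    · rw [uIcc_of_le (by linarith : (0:ℝ) ≤ -a)] at hx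
      rw [abs_of_nonneg hx.1]
  rw [← integral_add_adjacent_intervals
      ((aux_abs_rpow_intInt hp a 0)) ((aux_abs_rpow_intInt hp 0 b)), h1, h2]
  ring

lemma aux_rpow_subadd {x y p : ℝ} (hx : 0 ≤ x) (hy : 0 ≤ y) (hp0 : 0 ≤ p) (hp1 : p ≤ 1) :
    (x + y) ^ p ≤ x ^ p + y ^ p := by
  lift x to NNReal using hx
  lift y to NNReal using hy
  have := NNReal.rpow_add_le_add_rpow x y hp0 hp1
  exact_mod_cast this

theorem stmt_3 {Ω : Type*} [MeasurableSpace Ω] (P : Measure Ω) [IsProbabilityMeasure P]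
    (G : ℝ → Ω → ℝ) (β Cβ C'β : ℝ) (hβ : β ∈ Set.Ioo (1/2 : ℝ) 1)
    (hCβ : 0 < Cβ) (hC'β : 0 ≤ C'β) (Ψ : ℝ → ℝ → ℝ)
    (hΨ : ∀ u v : ℝ, 0 ≤ u → 0 ≤ v → |Ψ u v| ≤ C'β * (u * v) ^ (β - 1))
    (hrep : ∀ s t : ℝ, 0 ≤ s → s ≤ t →
      (∫ ω, (G t ω - G s ω) ^ 2 ∂P) =
        ∫ u in s..t, ∫ v in s..t, (Cβ * |u - v| ^ (2*β - 2) + Ψ u v)) :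
    ∃ C > (0:ℝ), ∀ s t : ℝ, 0 ≤ s → s ≤ t →
      (∫ ω, (G t ω - G s ω) ^ 2 ∂P) ≤ C * |t - s| ^ (2*β) := by
  obtain ⟨hβ1, hβ2⟩ := hβ
  set p : ℝ := 2 * β - 2 with hp_def
  have hp : -1 < p := by simp only [hp_def]; linarith
  have hp1 : (0:ℝ) < p + 1 := by linarith
  have hβ0 : (0:ℝ) < β := by linarith
  have hβ1' : -1 < β - 1 := by linarith
  refine ⟨2 * Cβ / (2 * β - 1) + C'β / β ^ 2, ?_, ?_⟩
  · have : 0 < 2 * Cβ / (2 * β - 1) := by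
      apply div_pos (by linarith) (by linarith)
    have : 0 ≤ C'β / β ^ 2 := div_nonneg hC'β (by positivity)
    linarith
  intro s t hs hst
  rw [hrep s t hs hst]
  rcases eq_or_lt_of_le hst with rfl | hlt
  · simp only [integral_same, sub_self, abs_zero]
    rw [Real.zero_rpow (by linarith : 2 * β ≠ 0), mul_zero]
  -- now s < t
  have hts : (0:ℝ) < t - s := by linarith
  have habs : |t - s| = t - s := abs_of_pos hts
  rw [habs]
  -- the majorant
  set M : ℝ → ℝ := fun u =>
    Cβ * (2 * (t - s) ^ (p + 1) / (p + 1)) + C'β * u ^ (β - 1) * ((t - s) ^ β / β)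
    with hM_def
  have hM_nonneg : ∀ u : ℝ, 0 ≤ u → 0 ≤ M u := by
    intro u hu
    have h1 : 0 ≤ Cβ * (2 * (t - s) ^ (p + 1) / (p + 1)) := by positivity
    have h2 : 0 ≤ C'β * u ^ (β - 1) * ((t - s) ^ β / β) := by positivity
    simp only [hM_def]; linarith
  -- bound on inner integral of |u - v| ^ p
  have habs_int : ∀ u : ℝ, IntervalIntegrable (fun v => |u - v| ^ p) volume s t := by
    intro u
    have := (aux_abs_rpow_intInt hp (u - s) (u - t)).comp_sub_left u
    simpa using this
  have habs_bound : ∀ u : ℝ, s ≤ u → u ≤ t →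
      (∫ v in s..t, |u - v| ^ p) ≤ 2 * (t - s) ^ (p + 1) / (p + 1) := by
    intro u hsu hut
    have hcomp : (∫ v in s..t, |u - v| ^ p) = ∫ x in (u - t)..(u - s), |x| ^ p :=
      integral_comp_sub_left (fun x => |x| ^ p) u
    rw [hcomp, aux_abs_rpow_integral hp (by linarith) (by linarith)]
    have e1 : (-(u - t)) ^ (p + 1) ≤ (t - s) ^ (p + 1) :=
      Real.rpow_le_rpow (by linarith) (by linarith) (le_of_lt hp1)
    have e2 : (u - s) ^ (p + 1) ≤ (t - s) ^ (p + 1) :=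
      Real.rpow_le_rpow (by linarith) (by linarith) (le_of_lt hp1)
    rw [div_le_div_iff_of_pos_right hp1] at *
    · linarith
  -- pointwise bound on inner integral
  have hinner : ∀ u : ℝ, s ≤ u → u ≤ t →
      (∫ v in s..t, (Cβ * |u - v| ^ p + Ψ u v)) ≤ M u := by
    intro u hsu hut
    have hu0 : 0 ≤ u := le_trans hs hsu
    by_cases hInt : IntervalIntegrable (fun v => Cβ * |u - v| ^ p + Ψ u v) volume s t
    · have h1 : IntervalIntegrable (fun v => Cβ * |u - v| ^ p) volume s t :=
        (habs_int u).const_mul Cβ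
      have h2 : IntervalIntegrable (fun v => Ψ u v) volume s t := by
        have := hInt.sub h1
        have heq : (fun v => (Cβ * |u - v| ^ p + Ψ u v) - Cβ * |u - v| ^ p)
            = fun v => Ψ u v := by funext v; ring
        rwa [heq] at this
      have hgint : IntervalIntegrable (fun v => C'β * u ^ (β - 1) * v ^ (β - 1)) volume s t :=
        (intervalIntegrable_rpow' hβ1').const_mul _
      rw [integral_add h1 h2]
      have hpart1 : (∫ v in s..t, Cβ * |u - v| ^ p)
          ≤ Cβ * (2 * (t - s) ^ (p + 1) / (p + 1)) := by
        rw [intervalIntegral.integral_const_mul]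
        exact mul_le_mul_of_nonneg_left (habs_bound u hsu hut) (le_of_lt hCβ)
      have hpart2 : (∫ v in s..t, Ψ u v) ≤ C'β * u ^ (β - 1) * ((t - s) ^ β / β) := by
        have step1 : (∫ v in s..t, Ψ u v) ≤ ∫ v in s..t, |Ψ u v| :=
          le_trans (le_abs_self _) (abs_integral_le_integral_abs hst)
        have step2 : (∫ v in s..t, |Ψ u v|) ≤ ∫ v in s..t, C'β * u ^ (β - 1) * v ^ (β - 1) := by
          apply integral_mono_on hst h2.abs hgint
          intro v hv
          have hv0 : 0 ≤ v := le_trans hs hv.1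
          calc |Ψ u v| ≤ C'β * (u * v) ^ (β - 1) := hΨ u v hu0 hv0
            _ = C'β * u ^ (β - 1) * v ^ (β - 1) := by
                rw [Real.mul_rpow hu0 hv0]; ring
        have step3 : (∫ v in s..t, C'β * u ^ (β - 1) * v ^ (β - 1))
            = C'β * u ^ (β - 1) * ((t ^ β - s ^ β) / β) := by
          rw [intervalIntegral.integral_const_mul, integral_rpow (Or.inl hβ1')]
          norm_num
        have step4 : (t ^ β - s ^ β) / β ≤ (t - s) ^ β / β := by
          apply div_le_div_of_nonneg_right _ hβ0.le
          have : t ^ β ≤ (t - s) ^ β + s ^ β := by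
            have := aux_rpow_subadd (x := t - s) (y := s) (by linarith) hs
              (le_of_lt hβ0) (le_of_lt hβ2)
            simpa using this
          linarith
        calc (∫ v in s..t, Ψ u v) ≤ C'β * u ^ (β - 1) * ((t ^ β - s ^ β) / β) := by
              rw [← step3]; exact le_trans step1 step2
          _ ≤ C'β * u ^ (β - 1) * ((t - s) ^ β / β) := by
              apply mul_le_mul_of_nonneg_left step4 (by positivity)
      simp only [hM_def]
      linarith
    · rw [integral_undef hInt]
      exact hM_nonneg u hu0
  -- outer integral
  by_cases hFint : IntervalIntegrable
      (fun u => ∫ v in s..t, (Cβ * |u - v| ^ p + Ψ u v)) volume s t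
  · have hMint : IntervalIntegrable M volume s t := by
      apply IntervalIntegrable.add
      · exact intervalIntegrable_const
      · exact ((intervalIntegrable_rpow' hβ1').const_mul _).mul_const _
    have houter : (∫ u in s..t, ∫ v in s..t, (Cβ * |u - v| ^ p + Ψ u v))
        ≤ ∫ u in s..t, M u := by
      apply integral_mono_on hst hFint hMint
      intro u hu
      exact hinner u hu.1 hu.2
    have hMval : (∫ u in s..t, M u)
        = Cβ * (2 * (t - s) ^ (p + 1) / (p + 1)) * (t - s)
          + C'β * ((t - s) ^ β / β) * ((t ^ β - s ^ β) / β) := by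
      simp only [hM_def]
      rw [integral_add intervalIntegrable_const
        (((intervalIntegrable_rpow' hβ1').const_mul _).mul_const _)]
      rw [intervalIntegral.integral_const, intervalIntegral.integral_mul_const, intervalIntegral.integral_const_mul,
        integral_rpow (Or.inl hβ1'), show β - 1 + 1 = β by ring]
      simp only [smul_eq_mul]
      ring
    have hfinal : Cβ * (2 * (t - s) ^ (p + 1) / (p + 1)) * (t - s)
          + C'β * ((t - s) ^ β / β) * ((t ^ β - s ^ β) / β)
        ≤ (2 * Cβ / (2 * β - 1) + C'β / β ^ 2) * (t - s) ^ (2 * β) := by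
      have hpe : p + 1 = 2 * β - 1 := by rw [hp_def]; ring
      have k1 : (t - s) ^ (p + 1) * (t - s) = (t - s) ^ (2 * β) := by
        rw [show (2:ℝ) * β = (p + 1) + 1 by rw [hp_def]; ring, Real.rpow_add hts (p + 1) 1, Real.rpow_one]
      have k2 : (t - s) ^ β * (t - s) ^ β = (t - s) ^ (2 * β) := by
        rw [← Real.rpow_add hts, show β + β = 2 * β by ring]
      have k3 : t ^ β - s ^ β ≤ (t - s) ^ β := by
        have := aux_rpow_subadd (x := t - s) (y := s) (by linarith) hs
          (le_of_lt hβ0) (le_of_lt hβ2)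
        simpa using this
      have k4 : C'β * ((t - s) ^ β / β) * ((t ^ β - s ^ β) / β)
          ≤ C'β / β ^ 2 * (t - s) ^ (2 * β) := by
        have h5 : C'β * ((t - s) ^ β / β) * ((t ^ β - s ^ β) / β)
            ≤ C'β * ((t - s) ^ β / β) * ((t - s) ^ β / β) := by
          apply mul_le_mul_of_nonneg_left (div_le_div_of_nonneg_right k3 hβ0.le)
          positivity
        calc C'β * ((t - s) ^ β / β) * ((t ^ β - s ^ β) / β)
            ≤ C'β * ((t - s) ^ β / β) * ((t - s) ^ β / β) := h5
          _ = C'β / β ^ 2 * ((t - s) ^ β * (t - s) ^ β) := by ring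
          _ = C'β / β ^ 2 * (t - s) ^ (2 * β) := by rw [k2]
      have k5 : Cβ * (2 * (t - s) ^ (p + 1) / (p + 1)) * (t - s)
          = 2 * Cβ / (2 * β - 1) * (t - s) ^ (2 * β) := by
        calc Cβ * (2 * (t - s) ^ (p + 1) / (p + 1)) * (t - s)
            = 2 * Cβ / (p + 1) * ((t - s) ^ (p + 1) * (t - s)) := by ring
          _ = 2 * Cβ / (2 * β - 1) * (t - s) ^ (2 * β) := by rw [k1, hpe]
      rw [add_mul]
      rw [k5]
      linarith
    calc (∫ u in s..t, ∫ v in s..t, (Cβ * |u - v| ^ p + Ψ u v))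
        ≤ ∫ u in s..t, M u := houter
      _ = _ := hMval
      _ ≤ _ := hfinal
  · rw [integral_undef hFint]
    have hC0 : 0 ≤ 2 * Cβ / (2 * β - 1) + C'β / β ^ 2 :=
      add_nonneg (div_nonneg (by linarith) (by linarith)) (div_nonneg hC'β (by positivity))
    exact mul_nonneg hC0 (Real.rpow_nonneg hts.le _)
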